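/- Assume [C1]–[C4], and let (λ_n) be a sequence of positive random variables satisfying [D1]–[D3]. Then λ_n^{-2} ‖Σ̂_{Z,n} − Σ̆_{Z,n}‖_{ℓ∞} = o_p(r) as n → ∞. -/

import Mathlib

open Filter MeasureTheory ProbabilityTheory Matrix
open scoped Topology ENNReal NNReal

noncomputable section

/-- Entrywise ℓ∞ norm of a matrix. -/
def linf {m k : ℕ} (A : Matrix (Fin m) (Fin k) ℝ) : ℝ := ⨆ i, ⨆ j, |A i j|

/-- Entrywise ℓ2 (Frobenius) norm of a matrix. -/
def l2 {m k : ℕ} (A : Matrix (Fin m) (Fin k) ℝ) : ℝ := Real.sqrt (∑ i, ∑ j, (A i j) ^ 2)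

/-- ℓ1 norm of the off-diagonal part of a square matrix. -/
def l1off {d : ℕ} (A : Matrix (Fin d) (Fin d) ℝ) : ℝ :=
  ∑ i, ∑ j, if i = j then 0 else |A i j|

/-- The ℓw norm of a vector, w ∈ [1,∞]. -/
def vecNorm (w : ℝ≥0∞) {k : ℕ} (x : Fin k → ℝ) : ℝ :=
  if w = ⊤ then ⨆ i, |x i| else (∑ i, |x i| ^ w.toReal) ^ (1 / w.toReal)

/-- The ℓw operator norm of a matrix. -/
def opNorm (w : ℝ≥0∞) {m k : ℕ} (A : Matrix (Fin m) (Fin k) ℝ) : ℝ :=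
  sSup {c : ℝ | ∃ x : Fin k → ℝ, vecNorm w x = 1 ∧ c = vecNorm w (A.mulVec x)}

/-- Largest eigenvalue of a symmetric matrix (via the Rayleigh quotient). -/
def lamMax {d : ℕ} (A : Matrix (Fin d) (Fin d) ℝ) : ℝ :=
  sSup {c : ℝ | ∃ x : Fin d → ℝ, ∑ i, (x i) ^ 2 = 1 ∧ c = ∑ i, ∑ j, x i * A i j * x j}

/-- Smallest eigenvalue of a symmetric matrix (via the Rayleigh quotient). -/
def lamMin {d : ℕ} (A : Matrix (Fin d) (Fin d) ℝ) : ℝ :=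
  sInf {c : ℝ | ∃ x : Fin d → ℝ, ∑ i, (x i) ^ 2 = 1 ∧ c = ∑ i, ∑ j, x i * A i j * x j}

/-- s(A): number of nonzero off-diagonal entries. -/
def spars {d : ℕ} (A : Matrix (Fin d) (Fin d) ℝ) : ℕ :=
  Set.ncard {p : Fin d × Fin d | p.1 ≠ p.2 ∧ A p.1 p.2 ≠ 0}

/-- 𝔡(A): maximal number of nonzero off-diagonal entries in a column. -/
def degree {d : ℕ} (A : Matrix (Fin d) (Fin d) ℝ) : ℕ :=
  ⨆ j : Fin d, Set.ncard {i : Fin d | i ≠ j ∧ A i j ≠ 0}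

/-- `Z_n = O_p(a_n)` for random variables on a sequence of probability spaces. -/
def IsBigOp {Ω : ℕ → Type*} [∀ n, MeasurableSpace (Ω n)] (P : ∀ n, Measure (Ω n))
    (Z a : ∀ n, Ω n → ℝ) : Prop :=
  ∀ ε : ℝ, 0 < ε → ∃ M : ℝ, 0 < M ∧
    Filter.limsup (fun n => ((P n) {ω | M * a n ω < |Z n ω|}).toReal) Filter.atTop ≤ ε

/-- `Z_n = o_p(a_n)`, i.e. `Z_n / a_n →ᵖ 0`. -/
def IsLittleOp {Ω : ℕ → Type*} [∀ n, MeasurableSpace (Ω n)] (P : ∀ n, Measure (Ω n))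
    (Z a : ∀ n, Ω n → ℝ) : Prop :=
  ∀ ε : ℝ, 0 < ε →
    Filter.Tendsto (fun n => ((P n) {ω | ε * a n ω < |Z n ω|}).toReal) Filter.atTop (nhds 0)

/-- Column-wise vectorization of a square matrix. -/
def vecM {d : ℕ} (A : Matrix (Fin d) (Fin d) ℝ) : Fin (d * d) → ℝ :=
  fun k => A (finProdFinEquiv.symm k).2 (finProdFinEquiv.symm k).1

/-- Kronecker product, reindexed to `Fin (d*d)`. -/
def kron {d : ℕ} (A B : Matrix (Fin d) (Fin d) ℝ) : Matrix (Fin (d * d)) (Fin (d * d)) ℝ :=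
  Matrix.reindex finProdFinEquiv finProdFinEquiv (Matrix.kroneckerMap (· * ·) A B)

/-- J̃ := −J(Θ ⊗ Θ). -/
def tildeJ {m k : ℕ} (J : Matrix (Fin m) (Fin (k * k)) ℝ) (Θ : Matrix (Fin k) (Fin k) ℝ) :
    Matrix (Fin m) (Fin (k * k)) ℝ :=
  -(J * kron Θ Θ)

/-- Standard Gaussian measure on ℝ^k. -/
def stdGaussianPi (k : ℕ) : Measure (Fin k → ℝ) :=
  MeasureTheory.Measure.pi fun _ => ProbabilityTheory.gaussianReal 0 1

instance (k : ℕ) : IsProbabilityMeasure (stdGaussianPi k) := by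
  unfold stdGaussianPi; infer_instance

/-- diag(S)^{1/2}. -/
def diagSqrt {d : ℕ} (S : Matrix (Fin d) (Fin d) ℝ) : Matrix (Fin d) (Fin d) ℝ :=
  Matrix.diagonal fun i => Real.sqrt (S i i)

/-- Correlation matrix V⁻¹ S V⁻¹ with V = diag(S)^{1/2}. -/
def corrOf {d : ℕ} (S : Matrix (Fin d) (Fin d) ℝ) : Matrix (Fin d) (Fin d) ℝ :=
  (diagSqrt S)⁻¹ * S * (diagSqrt S)⁻¹

/-- The weighted graphical-Lasso objective based on a covariance estimate `Sig`. -/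
def objTheta {d : ℕ} (Sig : Matrix (Fin d) (Fin d) ℝ) (lam : ℝ)
    (Θ : Matrix (Fin d) (Fin d) ℝ) : ℝ :=
  Matrix.trace (Θ * Sig) - Real.log Θ.det +
    lam * ∑ i, ∑ j, if i = j then 0
      else Real.sqrt (Sig i i) * Real.sqrt (Sig j j) * |Θ i j|

/-- The graphical-Lasso objective based on a correlation estimate `R`. -/
def objK {d : ℕ} (R : Matrix (Fin d) (Fin d) ℝ) (lam : ℝ)
    (K : Matrix (Fin d) (Fin d) ℝ) : ℝ :=
  Matrix.trace (K * R) - Real.log K.det + lam * l1off K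


section Helpers

lemma linf_nonneg {m k : ℕ} (A : Matrix (Fin m) (Fin k) ℝ) : 0 ≤ linf A :=
  Real.iSup_nonneg fun _ => Real.iSup_nonneg fun _ => abs_nonneg _

lemma abs_le_linf {m k : ℕ} (A : Matrix (Fin m) (Fin k) ℝ) (i : Fin m) (j : Fin k) :
    |A i j| ≤ linf A :=
  le_trans (le_ciSup (f := fun j' => |A i j'|) (Finite.bddAbove_range _) j)
    (le_ciSup (f := fun i' => ⨆ j', |A i' j'|) (Finite.bddAbove_range _) i)

lemma linf_le {m k : ℕ} {A : Matrix (Fin m) (Fin k) ℝ} {b : ℝ} (hb : 0 ≤ b)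
    (h : ∀ i j, |A i j| ≤ b) : linf A ≤ b :=
  Real.iSup_le (fun i => Real.iSup_le (fun j => h i j) hb) hb

lemma linf_neg {m k : ℕ} (A : Matrix (Fin m) (Fin k) ℝ) : linf (-A) = linf A := by
  unfold linf; simp

lemma qf_eq {k : ℕ} (A : Matrix (Fin k) (Fin k) ℝ) (x y : Fin k → ℝ) :
    ∑ i, ∑ j, x i * A i j * y j = x ⬝ᵥ A *ᵥ y := by
  simp [dotProduct, Matrix.mulVec, Finset.mul_sum, mul_assoc]

lemma abs_qf_le {k : ℕ} (A : Matrix (Fin k) (Fin k) ℝ) (x : Fin k → ℝ) :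
    |∑ i, ∑ j, x i * A i j * x j| ≤ linf A * ((k : ℝ) * ∑ i, x i ^ 2) := by
  calc |∑ i, ∑ j, x i * A i j * x j| ≤ ∑ i, |∑ j, x i * A i j * x j| :=
        Finset.abs_sum_le_sum_abs _ _
    _ ≤ ∑ i, ∑ j, |x i * A i j * x j| :=
        Finset.sum_le_sum fun i _ => Finset.abs_sum_le_sum_abs _ _
    _ ≤ ∑ i, ∑ j, |x i| * linf A * |x j| := by
        refine Finset.sum_le_sum fun i _ => Finset.sum_le_sum fun j _ => ?_
        rw [abs_mul, abs_mul]
        have h1 := abs_le_linf A i j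
        exact mul_le_mul_of_nonneg_right (mul_le_mul_of_nonneg_left h1 (abs_nonneg _)) (abs_nonneg _)
    _ = linf A * ((∑ i, |x i|) * ∑ j, |x j|) := by
        simp only [Finset.sum_mul, Finset.mul_sum]
        refine Finset.sum_congr rfl fun i _ => Finset.sum_congr rfl fun j _ => by ring
    _ ≤ linf A * ((k : ℝ) * ∑ i, x i ^ 2) := by
        have hcs : (∑ i, |x i|) ^ 2 ≤ ((Finset.univ : Finset (Fin k)).card : ℝ) * ∑ i, |x i| ^ 2 := by
          exact sq_sum_le_card_mul_sum_sq
        simp only [Finset.card_univ, Fintype.card_fin, sq_abs] at hcs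
        have h0 := linf_nonneg A
        have h1 := mul_le_mul_of_nonneg_left hcs h0
        nlinarith [h1]

lemma lamMin_le_qf {k : ℕ} (A : Matrix (Fin k) (Fin k) ℝ) (x : Fin k → ℝ)
    (hx : ∑ i, x i ^ 2 = 1) : lamMin A ≤ ∑ i, ∑ j, x i * A i j * x j := by
  refine csInf_le ⟨-(linf A * k), ?_⟩ ⟨x, hx, rfl⟩
  rintro c ⟨v, hv, rfl⟩
  have h := abs_qf_le A v
  rw [hv, mul_one] at h
  have := neg_abs_le (∑ i, ∑ j, v i * A i j * v j)
  linarith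

lemma lamMin_pos {k : ℕ} (hk : 0 < k) {A : Matrix (Fin k) (Fin k) ℝ} (hA : A.PosDef) :
    0 < lamMin A := by
  haveI : NeZero k := ⟨hk.ne'⟩
  set f : (Fin k → ℝ) → ℝ := fun x => ∑ i, ∑ j, x i * A i j * x j with hf
  set S : Set (Fin k → ℝ) := {x | ∑ i, x i ^ 2 = 1} with hS
  have hcont : Continuous f := by
    refine continuous_finset_sum _ fun i _ => continuous_finset_sum _ fun j _ => ?_
    exact ((continuous_apply i).mul continuous_const).mul (continuous_apply j)
  have hScont : Continuous (fun x : Fin k → ℝ => ∑ i, x i ^ 2) :=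
    continuous_finset_sum _ fun i _ => (continuous_apply i).pow 2
  have hclosed : IsClosed S := isClosed_eq hScont continuous_const
  have hbdd : Bornology.IsBounded S := by
    refine (Metric.isBounded_closedBall (x := (0 : Fin k → ℝ)) (r := 1)).subset ?_
    intro x hx
    rw [Metric.mem_closedBall, dist_zero_right]
    refine (pi_norm_le_iff_of_nonneg zero_le_one).2 fun i => ?_
    rw [Real.norm_eq_abs, ← Real.sqrt_one, ← Real.sqrt_sq_eq_abs]
    refine Real.sqrt_le_sqrt ?_
    rw [show (1:ℝ) = ∑ i, x i ^ 2 from hx.symm]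
    exact Finset.single_le_sum (fun j _ => sq_nonneg (x j)) (Finset.mem_univ i)
  have hcpt : IsCompact S := Metric.isCompact_of_isClosed_isBounded hclosed hbdd
  have hne : S.Nonempty := by
    refine ⟨Pi.single 0 1, ?_⟩
    simp [hS, Pi.single_apply]
  obtain ⟨x₀, hx₀S, hmin⟩ := hcpt.exists_isMinOn hne hcont.continuousOn
  have hx₀ : x₀ ≠ 0 := by
    intro h
    rw [hS] at hx₀S
    simp [h] at hx₀S
  have hpos : 0 < f x₀ := by
    have h := hA.dotProduct_mulVec_pos hx₀
    rw [star_trivial] at h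
    rw [hf]
    simpa [qf_eq] using h
  refine lt_of_lt_of_le hpos (le_csInf ⟨_, x₀, hx₀S, rfl⟩ ?_)
  rintro c ⟨v, hv, rfl⟩
  exact hmin hv

lemma qf_ge_of_unit {k : ℕ} {A : Matrix (Fin k) (Fin k) ℝ} {c : ℝ} (hc : 0 ≤ c)
    (h : ∀ x : Fin k → ℝ, ∑ i, x i ^ 2 = 1 → c ≤ ∑ i, ∑ j, x i * A i j * x j)
    (x : Fin k → ℝ) : c * ∑ i, x i ^ 2 ≤ ∑ i, ∑ j, x i * A i j * x j := by
  rcases eq_or_ne x 0 with rfl | hx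
  · simp
  · have ht : 0 < ∑ i, x i ^ 2 := by
      obtain ⟨i, hi⟩ := Function.ne_iff.1 hx
      exact Finset.sum_pos' (fun j _ => sq_nonneg _)
        ⟨i, Finset.mem_univ i, lt_of_le_of_ne (sq_nonneg _) (Ne.symm (pow_ne_zero 2 hi))⟩
    set t := ∑ i, x i ^ 2 with hT
    set a := Real.sqrt t with ha
    have hapos : 0 < a := Real.sqrt_pos.2 ht
    have hsq : a ^ 2 = t := Real.sq_sqrt ht.le
    have e1 : ∑ i, (a⁻¹ * x i) ^ 2 = 1 := by
      have : ∑ i, (a⁻¹ * x i) ^ 2 = a⁻¹ ^ 2 * t := by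
        rw [hT, Finset.mul_sum]
        exact Finset.sum_congr rfl fun i _ => by ring
      rw [this, inv_pow, hsq, inv_mul_cancel₀ ht.ne']
    have e2 : (∑ i, ∑ j, (a⁻¹ * x i) * A i j * (a⁻¹ * x j))
        = a⁻¹ ^ 2 * ∑ i, ∑ j, x i * A i j * x j := by
      rw [Finset.mul_sum]
      refine Finset.sum_congr rfl fun i _ => ?_
      rw [Finset.mul_sum]
      exact Finset.sum_congr rfl fun j _ => by ring
    have hkey := h _ e1
    rw [e2] at hkey
    have h2 := mul_le_mul_of_nonneg_left hkey ht.le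
    have h3 : t * (a⁻¹ ^ 2 * ∑ i, ∑ j, x i * A i j * x j) = ∑ i, ∑ j, x i * A i j * x j := by
      rw [← hsq]
      field_simp
    rw [h3] at h2
    linarith [h2]

end Helpers

section Helpers2

lemma qf_inv_le {k : ℕ} {A : Matrix (Fin k) (Fin k) ℝ} (hs : Aᵀ = A)
    (hu : IsUnit A.det) {c : ℝ} (hc : 0 < c)
    (hq : ∀ v : Fin k → ℝ, c * ∑ i, v i ^ 2 ≤ v ⬝ᵥ A *ᵥ v)
    (v : Fin k → ℝ) :
    0 ≤ v ⬝ᵥ A⁻¹ *ᵥ v ∧ v ⬝ᵥ A⁻¹ *ᵥ v ≤ (∑ i, v i ^ 2) / c := by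
  set w := A⁻¹ *ᵥ v with hw
  have hAw : A *ᵥ w = v := by
    rw [hw, Matrix.mulVec_mulVec, Matrix.mul_nonsing_inv _ hu, Matrix.one_mulVec]
  have h1 : v ⬝ᵥ A⁻¹ *ᵥ v = w ⬝ᵥ A *ᵥ w := by
    calc v ⬝ᵥ A⁻¹ *ᵥ v = v ⬝ᵥ w := rfl
      _ = (A *ᵥ w) ⬝ᵥ w := by rw [hAw]
      _ = w ⬝ᵥ A *ᵥ w := dotProduct_comm _ _
  have h2 : c * ∑ i, w i ^ 2 ≤ v ⬝ᵥ A⁻¹ *ᵥ v := h1 ▸ hq w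
  have hwnn : (0:ℝ) ≤ ∑ i, w i ^ 2 := Finset.sum_nonneg fun i _ => sq_nonneg _
  have hvnn : (0:ℝ) ≤ ∑ i, v i ^ 2 := Finset.sum_nonneg fun i _ => sq_nonneg _
  refine ⟨le_trans (mul_nonneg hc.le hwnn) h2, ?_⟩
  rcases le_or_gt (v ⬝ᵥ A⁻¹ *ᵥ v) 0 with h | h
  · exact le_trans h (div_nonneg hvnn hc.le)
  · have hCS : (∑ i, v i * w i) ^ 2 ≤ (∑ i, v i ^ 2) * ∑ i, w i ^ 2 :=
      Finset.sum_mul_sq_le_sq_mul_sq _ _ _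
    have ht : v ⬝ᵥ A⁻¹ *ᵥ v = ∑ i, v i * w i := rfl
    rw [ht] at h h2 ⊢
    rw [le_div_iff₀ hc]
    nlinarith [hCS, h2, hwnn, hvnn, mul_le_mul_of_nonneg_left h2 h.le]

lemma cross_le {k : ℕ} {M : Matrix (Fin k) (Fin k) ℝ} (hsym : Mᵀ = M)
    (hnn : ∀ v, 0 ≤ v ⬝ᵥ M *ᵥ v) (x y : Fin k → ℝ) :
    |x ⬝ᵥ M *ᵥ y| ≤ (x ⬝ᵥ M *ᵥ x + y ⬝ᵥ M *ᵥ y) / 2 := by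
  have hb : ∀ u v : Fin k → ℝ, u ⬝ᵥ M *ᵥ v = v ⬝ᵥ M *ᵥ u := by
    intro u v
    rw [Matrix.dotProduct_mulVec, ← Matrix.mulVec_transpose, hsym, dotProduct_comm]
  have h1 := hnn (x + y); have h2 := hnn (x - y)
  simp only [Matrix.mulVec_add, dotProduct_add, add_dotProduct,
    Matrix.mulVec_sub, dotProduct_sub, sub_dotProduct] at h1 h2
  rw [hb y x] at h1 h2
  rw [abs_le]
  constructor <;> linarith

lemma entry_eq_bil {d r : ℕ} (Δ : Matrix (Fin d) (Fin r) ℝ) (M : Matrix (Fin r) (Fin r) ℝ)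
    (i j : Fin d) :
    (Δ * M * Δᵀ) i j = (fun kk => Δ i kk) ⬝ᵥ M *ᵥ (fun l => Δ j l) := by
  simp only [Matrix.mul_apply, Matrix.transpose_apply, dotProduct, Matrix.mulVec,
    Finset.sum_mul, Finset.mul_sum]
  rw [Finset.sum_comm]
  exact Finset.sum_congr rfl fun kk _ => Finset.sum_congr rfl fun l _ => by ring

lemma key_identity {d r : ℕ} (Yh : Matrix (Fin d) (Fin d) ℝ) (B bet : Matrix (Fin d) (Fin r) ℝ)
    (A : Matrix (Fin r) (Fin r) ℝ) (hsym : Aᵀ = A) (hu : IsUnit A.det) :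
    (Yh - (B * A⁻¹) * A * (B * A⁻¹)ᵀ) - (Yh - B * betᵀ - bet * Bᵀ + bet * A * betᵀ)
      = -((B - bet * A) * A⁻¹ * (B - bet * A)ᵀ) := by
  have hAi : A⁻¹ᵀ = A⁻¹ := by rw [Matrix.transpose_nonsing_inv, hsym]
  have h1 : (B * A⁻¹) * A * (B * A⁻¹)ᵀ = B * A⁻¹ * Bᵀ := by
    rw [Matrix.transpose_mul, hAi, Matrix.mul_assoc (B * A⁻¹) A _, ← Matrix.mul_assoc A A⁻¹ Bᵀ,
      Matrix.mul_nonsing_inv _ hu, Matrix.one_mul]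
  have e1 : (B - bet * A) * A⁻¹ = B * A⁻¹ - bet := by
    rw [Matrix.sub_mul, Matrix.mul_assoc, Matrix.mul_nonsing_inv _ hu, Matrix.mul_one]
  have e2 : B * A⁻¹ * (A * betᵀ) = B * betᵀ := by
    rw [Matrix.mul_assoc B A⁻¹ _, ← Matrix.mul_assoc A⁻¹ A betᵀ,
      Matrix.nonsing_inv_mul _ hu, Matrix.one_mul]
  have h2 : (B - bet * A) * A⁻¹ * (B - bet * A)ᵀ
      = B * A⁻¹ * Bᵀ - B * betᵀ - bet * Bᵀ + bet * A * betᵀ := by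
    rw [Matrix.transpose_sub, Matrix.transpose_mul, hsym, e1, Matrix.sub_mul,
      Matrix.mul_sub, Matrix.mul_sub, e2, ← Matrix.mul_assoc bet A betᵀ]
    abel
  rw [h1, h2]
  abel

lemma mul_empty_zero {d r' : ℕ} (hr : r' = 0) (X : Matrix (Fin d) (Fin r') ℝ)
    (Y : Matrix (Fin r') (Fin d) ℝ) : X * Y = 0 := by
  subst hr
  ext i j
  simp [Matrix.mul_apply]

end Helpers2


/-- Σ̂_{Z,n} and Σ̆_{Z,n} are close (Lemma C.2). -/
theorem sigmaZhat_approx_breve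
    {Ω : ℕ → Type*} [∀ n, MeasurableSpace (Ω n)]
    (P : ∀ n, Measure (Ω n)) [∀ n, IsProbabilityMeasure (P n)]
    (d r : ℕ → ℕ) (hd : ∀ n, 2 ≤ d n)
    (β : ∀ n, Matrix (Fin (d n)) (Fin (r n)) ℝ)
    (SigX : ∀ n, Ω n → Matrix (Fin (r n)) (Fin (r n)) ℝ)
    (hSigX : ∀ n, ∀ᵐ ω ∂(P n), (SigX n ω).PosDef)
    (SigZ : ∀ n, Ω n → Matrix (Fin (d n)) (Fin (d n)) ℝ)
    (hSigZ : ∀ n, ∀ᵐ ω ∂(P n), (SigZ n ω).PosDef)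
    (SigY : ∀ n, Ω n → Matrix (Fin (d n)) (Fin (d n)) ℝ)
    (hSigY : ∀ n ω, SigY n ω = β n * SigX n ω * (β n)ᵀ + SigZ n ω)
    (SigYhat : ∀ n, Ω n → Matrix (Fin (d n)) (Fin (d n)) ℝ)
    (hSigYhat : ∀ n ω, (SigYhat n ω).IsSymm)
    (SigXhat : ∀ n, Ω n → Matrix (Fin (r n)) (Fin (r n)) ℝ)
    (hSigXhat : ∀ n ω, (SigXhat n ω).PosSemidef)
    (SigYXhat : ∀ n, Ω n → Matrix (Fin (d n)) (Fin (r n)) ℝ)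
    (SigXdag : ∀ n, Ω n → Matrix (Fin (r n)) (Fin (r n)) ℝ)
    (hSigXdag : ∀ n ω, (SigXdag n ω).PosDef ∧
      (IsUnit (SigXhat n ω).det → SigXdag n ω = (SigXhat n ω)⁻¹))
    (betaHat : ∀ n, Ω n → Matrix (Fin (d n)) (Fin (r n)) ℝ)
    (hbetaHat : ∀ n ω, betaHat n ω = SigYXhat n ω * SigXdag n ω)
    (SigZhat : ∀ n, Ω n → Matrix (Fin (d n)) (Fin (d n)) ℝ)
    (hSigZhat : ∀ n ω, SigZhat n ω =
      SigYhat n ω - betaHat n ω * SigXhat n ω * (betaHat n ω)ᵀ)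
    (SigZbreve : ∀ n, Ω n → Matrix (Fin (d n)) (Fin (d n)) ℝ)
    (hSigZbreve : ∀ n ω, SigZbreve n ω =
      SigYhat n ω - SigYXhat n ω * (β n)ᵀ - β n * (SigYXhat n ω)ᵀ +
        β n * SigXhat n ω * (β n)ᵀ)
    (hC1 : IsBigOp P (fun n ω => linf (SigY n ω)) (fun _ _ => 1))
    (hC1' : ∃ C : ℝ, ∀ n, linf (β n) ≤ C)
    (hC2 : IsBigOp P (fun n ω => lamMax (SigZ n ω) + (lamMin (SigZ n ω))⁻¹) (fun _ _ => 1))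
    (hC3 : IsBigOp P (fun n ω => linf (SigX n ω) + (lamMin (SigX n ω))⁻¹) (fun _ _ => 1))
    (s : ℕ → ℝ) (hs : ∀ n, 1 ≤ s n)
    (hC4 : IsBigOp P (fun n ω => (spars ((SigZ n ω)⁻¹) : ℝ)) (fun n _ => s n))
    (lam : ∀ n, Ω n → ℝ) (hlam : ∀ n ω, 0 < lam n ω)
    (hD1a : IsLittleOp P (fun n ω => linf (SigXhat n ω - SigX n ω)) lam)
    (hD1b : IsLittleOp P (fun n ω => linf (SigYXhat n ω - β n * SigXhat n ω)) lam)
    (hD1c : IsLittleOp P (fun n ω => linf (SigZbreve n ω - SigZ n ω)) lam)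
    (hD2 : IsLittleOp P (fun n ω => (s n + r n) * lam n ω) (fun _ _ => 1))
    (hD3 : Filter.Tendsto (fun n => ((P n) {ω |
        (Matrix.fromBlocks (SigXhat n ω) ((SigYXhat n ω)ᵀ)
          (SigYXhat n ω) (SigYhat n ω)).PosSemidef}).toReal)
      Filter.atTop (nhds 1)) :
    IsLittleOp P (fun n ω => ((lam n ω) ^ 2)⁻¹ * linf (SigZhat n ω - SigZbreve n ω))
      (fun n _ => (r n : ℝ)) := by
  have hple : ∀ (n : ℕ) (S : Set (Ω n)), ((P n) S).toReal ≤ 1 := by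
    intro n S
    have h := measure_mono (μ := P n) (Set.subset_univ S)
    rw [measure_univ] at h
    simpa using ENNReal.toReal_mono ENNReal.one_ne_top h
  intro ε hε
  rw [Metric.tendsto_atTop]
  intro η hη
  obtain ⟨M₃, hM₃pos, hM₃⟩ := hC3 (η/4) (by linarith)
  have hcpos : (0:ℝ) < (2*M₃)⁻¹ := by positivity
  set c : ℝ := (2*M₃)⁻¹ with hc
  have hδ0 : (0:ℝ) < Real.sqrt (ε * c) := Real.sqrt_pos.2 (by positivity)
  set δ : ℝ := Real.sqrt (ε * c) with hδdef
  have hδsq : δ ^ 2 = ε * c := Real.sq_sqrt (by positivity)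
  have h1 := (hD1a 1 one_pos).eventually_lt_const (show (0:ℝ) < η/8 by linarith)
  have h2 := (hD2 c hcpos).eventually_lt_const (show (0:ℝ) < η/8 by linarith)
  have h4 := (hD1b δ hδ0).eventually_lt_const (show (0:ℝ) < η/8 by linarith)
  have h3 := eventually_lt_of_limsup_lt (lt_of_le_of_lt hM₃ (show η/4 < η/2 by linarith))
    (isBoundedUnder_of ⟨1, fun n => hple n _⟩)
  obtain ⟨N, hN⟩ := Filter.eventually_atTop.1 (((h1.and h2).and (h4.and h3)))
  refine ⟨N, fun n hn => ?_⟩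
  obtain ⟨⟨e1, e2⟩, e4, e3⟩ := hN n hn
  have e1' : ((P n) {ω | 1 * lam n ω < |linf (SigXhat n ω - SigX n ω)|}).toReal < η/8 := e1
  have e2' : ((P n) {ω | c * 1 < |(s n + (r n : ℝ)) * lam n ω|}).toReal < η/8 := e2
  have e4' : ((P n) {ω | δ * lam n ω < |linf (SigYXhat n ω - β n * SigXhat n ω)|}).toReal
      < η/8 := e4
  have e3' : ((P n) {ω | M₃ * 1 < |linf (SigX n ω) + (lamMin (SigX n ω))⁻¹|}).toReal < η/2 := e3
  set B1 : Set (Ω n) := {ω | 1 * lam n ω < |linf (SigXhat n ω - SigX n ω)|}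
  set B2 : Set (Ω n) := {ω | c * 1 < |(s n + (r n : ℝ)) * lam n ω|}
  set B3 : Set (Ω n) := {ω | M₃ * 1 < |linf (SigX n ω) + (lamMin (SigX n ω))⁻¹|}
  set B4 : Set (Ω n) := {ω | δ * lam n ω < |linf (SigYXhat n ω - β n * SigXhat n ω)|}
  set B5 : Set (Ω n) := {ω | ¬ (SigX n ω).PosDef}
  set Bad : Set (Ω n) :=
    {ω | ε * (r n : ℝ) < |(lam n ω ^ 2)⁻¹ * linf (SigZhat n ω - SigZbreve n ω)|} with hBad
  have hsub : Bad ⊆ B1 ∪ (B2 ∪ (B3 ∪ (B4 ∪ B5))) := by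
    intro ω hω
    by_contra hnot
    simp only [Set.mem_union, not_or] at hnot
    obtain ⟨n1, n2, n3, n4, n5⟩ := hnot
    have hω' : ε * (r n : ℝ) < |(lam n ω ^ 2)⁻¹ * linf (SigZhat n ω - SigZbreve n ω)| := hω
    have hPD : (SigX n ω).PosDef := not_not.1 n5
    have hlw := hlam n ω
    rcases Nat.eq_zero_or_pos (r n) with hr0 | hrpos
    · have hz : SigZhat n ω - SigZbreve n ω = 0 := by
        rw [hSigZhat, hSigZbreve]
        rw [mul_empty_zero hr0 (betaHat n ω * SigXhat n ω) ((betaHat n ω)ᵀ),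
          mul_empty_zero hr0 (SigYXhat n ω) ((β n)ᵀ),
          mul_empty_zero hr0 (β n) ((SigYXhat n ω)ᵀ),
          mul_empty_zero hr0 (β n * SigXhat n ω) ((β n)ᵀ)]
        abel
      have hlz : linf (0 : Matrix (Fin (d n)) (Fin (d n)) ℝ) = 0 :=
        le_antisymm (linf_le le_rfl (by simp)) (linf_nonneg _)
      rw [hz, hlz, mul_zero, abs_zero, hr0] at hω'
      simp at hω'
    · have hn1 : ¬ (1 * lam n ω < |linf (SigXhat n ω - SigX n ω)|) := n1
      have hn2 : ¬ (c * 1 < |(s n + (r n : ℝ)) * lam n ω|) := n2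
      have hn3 : ¬ (M₃ * 1 < |linf (SigX n ω) + (lamMin (SigX n ω))⁻¹|) := n3
      have hn4 : ¬ (δ * lam n ω < |linf (SigYXhat n ω - β n * SigXhat n ω)|) := n4
      have hlmin := lamMin_pos hrpos hPD
      have hB3 : linf (SigX n ω) + (lamMin (SigX n ω))⁻¹ ≤ M₃ := by
        have h := not_lt.1 hn3
        rw [mul_one] at h
        exact le_trans (le_abs_self _) h
      have hXlinf_nn : 0 ≤ linf (SigX n ω) := linf_nonneg _
      have hM3inv : M₃⁻¹ ≤ lamMin (SigX n ω) :=
        inv_le_of_inv_le₀ hlmin (by linarith [inv_pos.2 hlmin])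
      have hDX : linf (SigXhat n ω - SigX n ω) ≤ lam n ω := by
        have h := not_lt.1 hn1
        rw [one_mul] at h
        exact le_trans (le_abs_self _) h
      have hsr : (s n + (r n : ℝ)) * lam n ω ≤ c := by
        have h := not_lt.1 hn2
        rw [mul_one] at h
        exact le_trans (le_abs_self _) h
      have hrl : (r n : ℝ) * lam n ω ≤ c := by
        nlinarith [mul_le_mul_of_nonneg_right (hs n) hlw.le]
      have hΔl : linf (SigYXhat n ω - β n * SigXhat n ω) ≤ δ * lam n ω :=
        le_trans (le_abs_self _) (not_lt.1 hn4)
      have hM3c : M₃⁻¹ = 2 * c := by rw [hc]; field_simp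
      have hray : ∀ x : Fin (r n) → ℝ, ∑ i, x i ^ 2 = 1 →
          c ≤ ∑ i, ∑ j, x i * SigXhat n ω i j * x j := by
        intro x hx
        have hA := lamMin_le_qf (SigX n ω) x hx
        have hD := abs_qf_le (SigXhat n ω - SigX n ω) x
        rw [hx, mul_one] at hD
        have hsplit : ∑ i, ∑ j, x i * SigXhat n ω i j * x j
            = (∑ i, ∑ j, x i * SigX n ω i j * x j)
              + ∑ i, ∑ j, x i * (SigXhat n ω - SigX n ω) i j * x j := by
          rw [← Finset.sum_add_distrib]
          refine Finset.sum_congr rfl fun i _ => ?_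
          rw [← Finset.sum_add_distrib]
          refine Finset.sum_congr rfl fun j _ => ?_
          simp only [Matrix.sub_apply]
          ring
        have h7 : linf (SigXhat n ω - SigX n ω) * (r n : ℝ) ≤ c :=
          calc linf (SigXhat n ω - SigX n ω) * (r n : ℝ)
              ≤ lam n ω * (r n : ℝ) := mul_le_mul_of_nonneg_right hDX (Nat.cast_nonneg _)
            _ = (r n : ℝ) * lam n ω := mul_comm _ _
            _ ≤ c := hrl
        rw [hsplit]
        have h8 := neg_abs_le (∑ i, ∑ j, x i * (SigXhat n ω - SigX n ω) i j * x j)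
        linarith
      have hq : ∀ v : Fin (r n) → ℝ, c * ∑ i, v i ^ 2 ≤ v ⬝ᵥ SigXhat n ω *ᵥ v := by
        intro v
        rw [← qf_eq]
        exact qf_ge_of_unit hcpos.le hray v
      have hherm := (hSigXhat n ω).1
      have hXsym : (SigXhat n ω)ᵀ = SigXhat n ω := by
        rw [← Matrix.conjTranspose_eq_transpose_of_trivial]
        exact hherm
      have hPDhat : (SigXhat n ω).PosDef := by
        refine Matrix.PosDef.of_dotProduct_mulVec_pos hherm fun x hx => ?_
        rw [star_trivial]
        have hxpos : 0 < ∑ i, x i ^ 2 := by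
          obtain ⟨i, hi⟩ := Function.ne_iff.1 hx
          exact Finset.sum_pos' (fun j _ => sq_nonneg _)
            ⟨i, Finset.mem_univ i, lt_of_le_of_ne (sq_nonneg _) (Ne.symm (pow_ne_zero 2 hi))⟩
        exact lt_of_lt_of_le (mul_pos hcpos hxpos) (hq x)
      have hdet : IsUnit (SigXhat n ω).det := hPDhat.det_pos.ne'.isUnit
      have hdag : SigXdag n ω = (SigXhat n ω)⁻¹ := (hSigXdag n ω).2 hdet
      have hid : SigZhat n ω - SigZbreve n ω
          = -((SigYXhat n ω - β n * SigXhat n ω) * (SigXhat n ω)⁻¹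
              * (SigYXhat n ω - β n * SigXhat n ω)ᵀ) := by
        rw [hSigZhat, hSigZbreve, hbetaHat, hdag]
        exact key_identity _ _ _ _ hXsym hdet
      have hAisym : ((SigXhat n ω)⁻¹)ᵀ = (SigXhat n ω)⁻¹ := by
        rw [Matrix.transpose_nonsing_inv, hXsym]
      have hpar := fun v => qf_inv_le hXsym hdet hcpos hq v
      set Δm := SigYXhat n ω - β n * SigXhat n ω with hΔm
      have hrow : ∀ i : Fin (d n), ∑ kk, (Δm i kk) ^ 2 ≤ (r n : ℝ) * (δ * lam n ω) ^ 2 := by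
        intro i
        calc ∑ kk, (Δm i kk) ^ 2 ≤ ∑ _kk : Fin (r n), (δ * lam n ω) ^ 2 := by
              refine Finset.sum_le_sum fun kk _ => ?_
              have h := (abs_le_linf Δm i kk).trans hΔl
              calc Δm i kk ^ 2 = |Δm i kk| ^ 2 := (sq_abs _).symm
                _ ≤ (δ * lam n ω) ^ 2 := pow_le_pow_left₀ (abs_nonneg _) h 2
          _ = (r n : ℝ) * (δ * lam n ω) ^ 2 := by
              rw [Finset.sum_const, Finset.card_univ, Fintype.card_fin, nsmul_eq_mul]
      have hbound : ∀ i j, |(Δm * (SigXhat n ω)⁻¹ * Δmᵀ) i j|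
          ≤ (r n : ℝ) * (δ * lam n ω) ^ 2 / c := by
        intro i j
        rw [entry_eq_bil]
        refine le_trans (cross_le hAisym (fun v => (hpar v).1) _ _) ?_
        have b1 := (hpar (fun kk => Δm i kk)).2
        have b2 := (hpar (fun kk => Δm j kk)).2
        have r1 := hrow i
        have r2 := hrow j
        have d1 : (∑ kk, (Δm i kk) ^ 2) / c ≤ (r n : ℝ) * (δ * lam n ω) ^ 2 / c := by gcongr
        have d2 : (∑ kk, (Δm j kk) ^ 2) / c ≤ (r n : ℝ) * (δ * lam n ω) ^ 2 / c := by gcongr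
        linarith
      have hkey : (r n : ℝ) * (δ * lam n ω) ^ 2 / c = ε * (r n : ℝ) * lam n ω ^ 2 := by
        rw [mul_pow, hδsq]
        field_simp
      have hlinf : linf (SigZhat n ω - SigZbreve n ω) ≤ ε * (r n : ℝ) * lam n ω ^ 2 := by
        rw [hid, linf_neg]
        refine linf_le ?_ fun i j => le_trans (hbound i j) (le_of_eq hkey)
        exact mul_nonneg (mul_nonneg hε.le (Nat.cast_nonneg _)) (sq_nonneg _)
      have hfin : |(lam n ω ^ 2)⁻¹ * linf (SigZhat n ω - SigZbreve n ω)| ≤ ε * (r n : ℝ) := by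
        rw [abs_of_nonneg (mul_nonneg (inv_nonneg.2 (sq_nonneg _)) (linf_nonneg _))]
        calc (lam n ω ^ 2)⁻¹ * linf (SigZhat n ω - SigZbreve n ω)
            ≤ (lam n ω ^ 2)⁻¹ * (ε * (r n : ℝ) * lam n ω ^ 2) :=
              mul_le_mul_of_nonneg_left hlinf (inv_nonneg.2 (sq_nonneg _))
          _ = ε * (r n : ℝ) := by
              rw [mul_comm]
              exact mul_inv_cancel_right₀ (pow_ne_zero 2 hlw.ne') _
      exact absurd hω' (not_lt.2 hfin)
  have hB5 : (P n) B5 = 0 := ae_iff.1 (hSigX n)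
  have hchain : (P n) Bad ≤ (P n) B1 + (P n) B2 + (P n) B3 + (P n) B4 := by
    refine (measure_mono hsub).trans ?_
    calc (P n) (B1 ∪ (B2 ∪ (B3 ∪ (B4 ∪ B5))))
        ≤ (P n) B1 + (P n) (B2 ∪ (B3 ∪ (B4 ∪ B5))) := measure_union_le _ _
      _ ≤ (P n) B1 + ((P n) B2 + (P n) (B3 ∪ (B4 ∪ B5))) :=
          add_le_add_right (measure_union_le _ _) _
      _ ≤ (P n) B1 + ((P n) B2 + ((P n) B3 + (P n) (B4 ∪ B5))) :=
          add_le_add_right (add_le_add_right (measure_union_le _ _) _) _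
      _ ≤ (P n) B1 + ((P n) B2 + ((P n) B3 + ((P n) B4 + (P n) B5))) :=
          add_le_add_right (add_le_add_right (add_le_add_right (measure_union_le _ _) _) _) _
      _ = (P n) B1 + (P n) B2 + (P n) B3 + (P n) B4 := by rw [hB5]; ring
  have hfin4 : (P n) B1 + (P n) B2 + (P n) B3 + (P n) B4 ≠ ⊤ :=
    ENNReal.add_ne_top.2 ⟨ENNReal.add_ne_top.2 ⟨ENNReal.add_ne_top.2
      ⟨measure_ne_top _ _, measure_ne_top _ _⟩, measure_ne_top _ _⟩, measure_ne_top _ _⟩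
  have hu : ((P n) Bad).toReal
      ≤ ((P n) B1).toReal + ((P n) B2).toReal + ((P n) B3).toReal + ((P n) B4).toReal := by
    refine (ENNReal.toReal_mono hfin4 hchain).trans ?_
    calc ((P n) B1 + (P n) B2 + (P n) B3 + (P n) B4).toReal
        ≤ ((P n) B1 + (P n) B2 + (P n) B3).toReal + ((P n) B4).toReal := ENNReal.toReal_add_le
      _ ≤ (((P n) B1 + (P n) B2).toReal + ((P n) B3).toReal) + ((P n) B4).toReal :=
          add_le_add_left ENNReal.toReal_add_le _
      _ ≤ (((P n) B1).toReal + ((P n) B2).toReal + ((P n) B3).toReal) + ((P n) B4).toReal :=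
          add_le_add_left (add_le_add_left ENNReal.toReal_add_le _) _
  have hgoal : ((P n) Bad).toReal < η := by
    have := hu
    linarith [e1', e2', e3', e4']
  show dist ((P n) Bad).toReal 0 < η
  rw [Real.dist_eq, sub_zero, abs_of_nonneg ENNReal.toReal_nonneg]
  exact hgoal


end
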